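/- arXiv:2510.18770 — 2 statements merged into one kernel-verified Lean document; each statement's English description precedes it below -/
import Mathlib

section
/- hom(P_5, T(7,1,9)) = 9366, hom(P_7, T(7,1,9)) = 106302, hom(E_5, T(7,1,9)) = 9492, and hom(E_7, T(7,1,9)) = 106932. -/
/-- A graph, possibly with loops but without multiple edges: a symmetric
adjacency relation on the vertex type. -/
structure LGraph (V : Type*) where
  Adj : V → V → Prop
  symm : ∀ {u v}, Adj u v → Adj v u

/-- `f` is a homomorphism (H-coloring) from `G` to `H`. -/
def LGraph.IsHom {A B : Type*} (G : LGraph A) (H : LGraph B) (f : A → B) : Prop :=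
  ∀ ⦃x y⦄, G.Adj x y → H.Adj (f x) (f y)

/-- The number of homomorphisms from `G` to `H`. -/
noncomputable def homCount {A B : Type*} (G : LGraph A) (H : LGraph B) : ℕ :=
  Nat.card {f : A → B // G.IsHom H f}

/-- `e` is an automorphism of `H`. -/
def IsAut {V : Type*} (H : LGraph V) (e : V ≃ V) : Prop :=
  ∀ a b, H.Adj (e a) (e b) ↔ H.Adj a b

/-- `u` and `v` are automorphically similar in `H`. -/
def AutSim {V : Type*} (H : LGraph V) (u v : V) : Prop :=
  ∃ e : V ≃ V, IsAut H e ∧ e u = v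

/-- The path on `n` vertices. -/
def pathGraph (n : ℕ) : LGraph (Fin n) where
  Adj i j := j.val = i.val + 1 ∨ i.val = j.val + 1
  symm h := h.symm

/-- Upward adjacency for `eGraph`. -/
def eUp (n : ℕ) (i j : Fin n) : Prop :=
  (j.val = i.val + 1 ∧ j.val ≤ n - 2) ∨ (i.val = n - 4 ∧ j.val = n - 1)

/-- The tree `E_n`: the path on `n-1` vertices `0,…,n-2` with a pendant
vertex `n-1` attached to vertex `n-4` (distance 2 from the end `n-2`). -/
def eGraph (n : ℕ) : LGraph (Fin n) where
  Adj i j := eUp n i j ∨ eUp n j i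
  symm h := h.symm

/-- Vertices of the spherically symmetric rooted tree `T(x,y,z)`. -/
abbrev TVert (x y z : ℕ) : Type :=
  Unit ⊕ Fin x ⊕ (Fin x × Fin y) ⊕ (Fin x × Fin y × Fin z)

/-- Parent-to-child adjacency in `T(x,y,z)`. -/
def tUp (x y z : ℕ) : TVert x y z → TVert x y z → Prop
  | Sum.inl _, Sum.inr (Sum.inl _) => True
  | Sum.inr (Sum.inl i), Sum.inr (Sum.inr (Sum.inl p)) => p.1 = i
  | Sum.inr (Sum.inr (Sum.inl p)), Sum.inr (Sum.inr (Sum.inr q)) =>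
      q.1 = p.1 ∧ q.2.1 = p.2
  | _, _ => False

/-- The tree `T(x,y,z)`: the root has `x` children, each child has `y`
children, each grandchild has `z` children. -/
def tGraph (x y z : ℕ) : LGraph (TVert x y z) where
  Adj a b := tUp x y z a b ∨ tUp x y z b a
  symm h := h.symm

/-- `T̂(x,y,z)`: `T(x,y,z)` with a loop added at the root. -/
def tHatGraph (x y z : ℕ) : LGraph (TVert x y z) where
  Adj a b := tUp x y z a b ∨ tUp x y z b a ∨ (a = Sum.inl () ∧ b = Sum.inl ())
  symm := by
    rintro a b (h | h | ⟨h1, h2⟩)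
    · exact Or.inr (Or.inl h)
    · exact Or.inl h
    · exact Or.inr (Or.inr ⟨h2, h1⟩)

/-- The distance level of a vertex of `T(x,y,z)` from the root. -/
def tLevel {x y z : ℕ} : TVert x y z → Fin 4
  | Sum.inl _ => 0
  | Sum.inr (Sum.inl _) => 1
  | Sum.inr (Sum.inr (Sum.inl _)) => 2
  | Sum.inr (Sum.inr (Sum.inr _)) => 3

/-- Upward adjacency for the path-like extension of `G` at `v0`. -/
def extUp {A : Type*} (G : LGraph A) (v0 : A) (n : ℕ) :
    (A ⊕ Fin n) → (A ⊕ Fin n) → Prop := fun a b =>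
  (∃ u w, G.Adj u w ∧ a = Sum.inl u ∧ b = Sum.inl w) ∨
  (∃ i : Fin n, i.val = 0 ∧ a = Sum.inl v0 ∧ b = Sum.inr i) ∨
  (∃ i j : Fin n, j.val = i.val + 1 ∧ a = Sum.inr i ∧ b = Sum.inr j)

/-- `G_n`: the graph obtained from `G_0 = G` by appending a path of `n` new
vertices at `v0`. -/
def pathAppend {A : Type*} (G : LGraph A) (v0 : A) (n : ℕ) : LGraph (A ⊕ Fin n) where
  Adj a b := extUp G v0 n a b ∨ extUp G v0 n b a
  symm h := h.symm

instance tUpDec (x y z : ℕ) : ∀ a b, Decidable (tUp x y z a b)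
  | Sum.inl _, Sum.inr (Sum.inl _) => .isTrue trivial
  | Sum.inr (Sum.inl i), Sum.inr (Sum.inr (Sum.inl p)) =>
      inferInstanceAs (Decidable (p.1 = i))
  | Sum.inr (Sum.inr (Sum.inl p)), Sum.inr (Sum.inr (Sum.inr q)) =>
      inferInstanceAs (Decidable (q.1 = p.1 ∧ q.2.1 = p.2))
  | Sum.inl _, Sum.inl _ => .isFalse id
  | Sum.inl _, Sum.inr (Sum.inr (Sum.inl _)) => .isFalse id
  | Sum.inl _, Sum.inr (Sum.inr (Sum.inr _)) => .isFalse id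
  | Sum.inr (Sum.inl _), Sum.inl _ => .isFalse id
  | Sum.inr (Sum.inl _), Sum.inr (Sum.inl _) => .isFalse id
  | Sum.inr (Sum.inl _), Sum.inr (Sum.inr (Sum.inr _)) => .isFalse id
  | Sum.inr (Sum.inr (Sum.inl _)), Sum.inl _ => .isFalse id
  | Sum.inr (Sum.inr (Sum.inl _)), Sum.inr (Sum.inl _) => .isFalse id
  | Sum.inr (Sum.inr (Sum.inl _)), Sum.inr (Sum.inr (Sum.inl _)) => .isFalse id
  | Sum.inr (Sum.inr (Sum.inr _)), Sum.inl _ => .isFalse id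
  | Sum.inr (Sum.inr (Sum.inr _)), Sum.inr (Sum.inl _) => .isFalse id
  | Sum.inr (Sum.inr (Sum.inr _)), Sum.inr (Sum.inr (Sum.inl _)) => .isFalse id
  | Sum.inr (Sum.inr (Sum.inr _)), Sum.inr (Sum.inr (Sum.inr _)) => .isFalse id

instance tAdjDec (x y z : ℕ) (a b : TVert x y z) : Decidable ((tGraph x y z).Adj a b) :=
  inferInstanceAs (Decidable (_ ∨ _))

def wstep (g : Fin 4 → ℕ) : Fin 4 → ℕ :=
  ![7 * g 1, g 0 + g 2, g 1 + 9 * g 3, g 2]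


lemma keyK (g : Fin 4 → ℕ) (v : TVert 7 1 9) :
    ∑ u : {u // (tGraph 7 1 9).Adj v u}, g (tLevel u.1) = wstep g (tLevel v) := by
  rw [← Finset.subtype_univ, Finset.sum_subtype_eq_sum_filter (fun u => g (tLevel u)), Finset.sum_filter]
  rcases v with _ | i | p | q <;>
    simp [Fintype.sum_sum_type, Fintype.sum_prod_type, tGraph, tUp, tLevel, wstep,
      Finset.sum_ite_eq, Finset.sum_ite_eq', ite_and, Fin.fin_one_eq_zero, Finset.sum_const,
      Finset.card_univ, mul_comm]
  rw [Finset.sum_comm]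
  simp [Finset.sum_ite_eq', mul_comm]

def wfun : ℕ → Fin 4 → ℕ
  | 0 => fun _ => 1
  | (k+1) => wstep (wfun k)

abbrev NT (v : TVert 7 1 9) := {u // (tGraph 7 1 9).Adj v u}

def Chain : ℕ → TVert 7 1 9 → Type
  | 0, _ => PUnit
  | (k+1), v => Σ a : NT v, Chain k a.1

instance chainFintype : ∀ (k : ℕ) (v : TVert 7 1 9), Fintype (Chain k v)
  | 0, _ => inferInstanceAs (Fintype PUnit)
  | (k+1), v => by
      have : ∀ (a : NT v), Fintype (Chain k a.1) := fun a => chainFintype k a.1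
      exact inferInstanceAs (Fintype (Σ a : NT v, Chain k a.1))

lemma chainCard : ∀ (k : ℕ) (v : TVert 7 1 9),
    Nat.card (Chain k v) = wfun k (tLevel v)
  | 0, v => by
      rw [Nat.card_eq_fintype_card]
      simp [Chain, wfun]
      rfl
  | (k+1), v => by
      have h1 : Nat.card (Chain (k+1) v) = Nat.card (Σ a : NT v, Chain k a.1) := rfl
      rw [h1, Nat.card_eq_fintype_card, Fintype.card_sigma]
      have h2 : ∀ a : NT v, Fintype.card (Chain k a.1) = wfun k (tLevel a.1) := by
        intro a; rw [← Nat.card_eq_fintype_card]; exact chainCard k a.1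
      calc ∑ a : NT v, Fintype.card (Chain k a.1)
          = ∑ a : NT v, wfun k (tLevel a.1) := Finset.sum_congr rfl (fun a _ => h2 a)
        _ = wstep (wfun k) (tLevel v) := keyK (wfun k) v
        _ = wfun (k+1) (tLevel v) := rfl

lemma totcard (k : ℕ) :
    Nat.card (Σ v : TVert 7 1 9, Chain k v)
      = ∑ v : TVert 7 1 9, wfun k (tLevel v) := by
  rw [Nat.card_eq_fintype_card, Fintype.card_sigma]
  exact Finset.sum_congr rfl fun v _ => by
    rw [← Nat.card_eq_fintype_card]; exact chainCard k v


instance pathAdjDec (n : ℕ) (i j : Fin n) : Decidable ((pathGraph n).Adj i j) :=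
  inferInstanceAs (Decidable (_ ∨ _))

instance eUpDec (n : ℕ) (i j : Fin n) : Decidable (eUp n i j) :=
  inferInstanceAs (Decidable (_ ∨ _))

instance eAdjDec (n : ℕ) (i j : Fin n) : Decidable ((eGraph n).Adj i j) :=
  inferInstanceAs (Decidable (_ ∨ _))

def eqP5 : {f : Fin 5 → TVert 7 1 9 // (pathGraph 5).IsHom (tGraph 7 1 9) f} ≃
    Σ v : TVert 7 1 9, Chain 4 v where
  toFun f := ⟨f.1 0, ⟨f.1 1, f.2 (by decide)⟩, ⟨f.1 2, f.2 (by decide)⟩,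
    ⟨f.1 3, f.2 (by decide)⟩, ⟨f.1 4, f.2 (by decide)⟩, PUnit.unit⟩
  invFun s := ⟨![s.1, s.2.1.1, s.2.2.1.1, s.2.2.2.1.1, s.2.2.2.2.1.1], by
    intro x y h
    fin_cases x <;> fin_cases y <;>
      first
        | exact absurd h (by decide)
        | exact s.2.1.2
        | exact (tGraph 7 1 9).symm s.2.1.2
        | exact s.2.2.1.2
        | exact (tGraph 7 1 9).symm s.2.2.1.2
        | exact s.2.2.2.1.2
        | exact (tGraph 7 1 9).symm s.2.2.2.1.2
        | exact s.2.2.2.2.1.2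
        | exact (tGraph 7 1 9).symm s.2.2.2.2.1.2⟩
  left_inv f := Subtype.ext (funext fun i => by fin_cases i <;> rfl)
  right_inv s := rfl

def eqP7 : {f : Fin 7 → TVert 7 1 9 // (pathGraph 7).IsHom (tGraph 7 1 9) f} ≃
    Σ v : TVert 7 1 9, Chain 6 v where
  toFun f := ⟨f.1 0, ⟨f.1 1, f.2 (by decide)⟩, ⟨f.1 2, f.2 (by decide)⟩,
    ⟨f.1 3, f.2 (by decide)⟩, ⟨f.1 4, f.2 (by decide)⟩, ⟨f.1 5, f.2 (by decide)⟩,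
    ⟨f.1 6, f.2 (by decide)⟩, PUnit.unit⟩
  invFun s := ⟨![s.1, s.2.1.1, s.2.2.1.1, s.2.2.2.1.1, s.2.2.2.2.1.1,
      s.2.2.2.2.2.1.1, s.2.2.2.2.2.2.1.1], by
    intro x y h
    fin_cases x <;> fin_cases y <;>
      first
        | exact absurd h (by decide)
        | exact s.2.1.2
        | exact (tGraph 7 1 9).symm s.2.1.2
        | exact s.2.2.1.2
        | exact (tGraph 7 1 9).symm s.2.2.1.2
        | exact s.2.2.2.1.2
        | exact (tGraph 7 1 9).symm s.2.2.2.1.2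
        | exact s.2.2.2.2.1.2
        | exact (tGraph 7 1 9).symm s.2.2.2.2.1.2
        | exact s.2.2.2.2.2.1.2
        | exact (tGraph 7 1 9).symm s.2.2.2.2.2.1.2
        | exact s.2.2.2.2.2.2.1.2
        | exact (tGraph 7 1 9).symm s.2.2.2.2.2.2.1.2⟩
  left_inv f := Subtype.ext (funext fun i => by fin_cases i <;> rfl)
  right_inv s := rfl

def eqE5 : {f : Fin 5 → TVert 7 1 9 // (eGraph 5).IsHom (tGraph 7 1 9) f} ≃
    Σ v : TVert 7 1 9, Chain 2 v × Chain 1 v × Chain 1 v where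
  toFun f := ⟨f.1 1,
    ⟨⟨f.1 2, f.2 (by decide)⟩, ⟨f.1 3, f.2 (by decide)⟩, PUnit.unit⟩,
    ⟨⟨f.1 0, f.2 (by decide)⟩, PUnit.unit⟩,
    ⟨⟨f.1 4, f.2 (by decide)⟩, PUnit.unit⟩⟩
  invFun s := ⟨![s.2.2.1.1.1, s.1, s.2.1.1.1, s.2.1.2.1.1, s.2.2.2.1.1], by
    intro x y h
    fin_cases x <;> fin_cases y <;>
      first
        | exact absurd h (by decide)
        | exact s.2.1.1.2
        | exact (tGraph 7 1 9).symm s.2.1.1.2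
        | exact s.2.1.2.1.2
        | exact (tGraph 7 1 9).symm s.2.1.2.1.2
        | exact s.2.2.1.1.2
        | exact (tGraph 7 1 9).symm s.2.2.1.1.2
        | exact s.2.2.2.1.2
        | exact (tGraph 7 1 9).symm s.2.2.2.1.2⟩
  left_inv f := Subtype.ext (funext fun i => by fin_cases i <;> rfl)
  right_inv s := rfl

def eqE7 : {f : Fin 7 → TVert 7 1 9 // (eGraph 7).IsHom (tGraph 7 1 9) f} ≃
    Σ v : TVert 7 1 9, Chain 3 v × Chain 2 v × Chain 1 v where
  toFun f := ⟨f.1 3,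
    ⟨⟨f.1 2, f.2 (by decide)⟩, ⟨f.1 1, f.2 (by decide)⟩,
      ⟨f.1 0, f.2 (by decide)⟩, PUnit.unit⟩,
    ⟨⟨f.1 4, f.2 (by decide)⟩, ⟨f.1 5, f.2 (by decide)⟩, PUnit.unit⟩,
    ⟨⟨f.1 6, f.2 (by decide)⟩, PUnit.unit⟩⟩
  invFun s := ⟨![s.2.1.2.2.1.1, s.2.1.2.1.1, s.2.1.1.1, s.1, s.2.2.1.1.1,
      s.2.2.1.2.1.1, s.2.2.2.1.1], by
    intro x y h
    fin_cases x <;> fin_cases y <;>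
      first
        | exact absurd h (by decide)
        | exact s.2.1.1.2
        | exact (tGraph 7 1 9).symm s.2.1.1.2
        | exact s.2.1.2.1.2
        | exact (tGraph 7 1 9).symm s.2.1.2.1.2
        | exact s.2.1.2.2.1.2
        | exact (tGraph 7 1 9).symm s.2.1.2.2.1.2
        | exact s.2.2.1.1.2
        | exact (tGraph 7 1 9).symm s.2.2.1.1.2
        | exact s.2.2.1.2.1.2
        | exact (tGraph 7 1 9).symm s.2.2.1.2.1.2
        | exact s.2.2.2.1.2
        | exact (tGraph 7 1 9).symm s.2.2.2.1.2⟩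
  left_inv f := Subtype.ext (funext fun i => by fin_cases i <;> rfl)
  right_inv s := rfl

lemma hP5 : homCount (pathGraph 5) (tGraph 7 1 9) = 9366 :=
  calc homCount (pathGraph 5) (tGraph 7 1 9)
      = Nat.card (Σ v : TVert 7 1 9, Chain 4 v) := Nat.card_congr eqP5
    _ = ∑ v : TVert 7 1 9, wfun 4 (tLevel v) := totcard 4
    _ = 9366 := by decide

lemma hP7 : homCount (pathGraph 7) (tGraph 7 1 9) = 106302 :=
  calc homCount (pathGraph 7) (tGraph 7 1 9)
      = Nat.card (Σ v : TVert 7 1 9, Chain 6 v) := Nat.card_congr eqP7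
    _ = ∑ v : TVert 7 1 9, wfun 6 (tLevel v) := totcard 6
    _ = 106302 := by decide

lemma hE5 : homCount (eGraph 5) (tGraph 7 1 9) = 9492 := by
  have h1 : homCount (eGraph 5) (tGraph 7 1 9)
      = Nat.card (Σ v : TVert 7 1 9, Chain 2 v × Chain 1 v × Chain 1 v) :=
    Nat.card_congr eqE5
  rw [h1, Nat.card_eq_fintype_card, Fintype.card_sigma]
  have h2 : ∀ v : TVert 7 1 9, Fintype.card (Chain 2 v × Chain 1 v × Chain 1 v)
      = wfun 2 (tLevel v) * (wfun 1 (tLevel v) * wfun 1 (tLevel v)) := by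
    intro v
    rw [← Nat.card_eq_fintype_card]
    simp only [Nat.card_prod, chainCard]
  rw [Finset.sum_congr rfl fun v _ => h2 v]
  decide

lemma hE7 : homCount (eGraph 7) (tGraph 7 1 9) = 106932 := by
  have h1 : homCount (eGraph 7) (tGraph 7 1 9)
      = Nat.card (Σ v : TVert 7 1 9, Chain 3 v × Chain 2 v × Chain 1 v) :=
    Nat.card_congr eqE7
  rw [h1, Nat.card_eq_fintype_card, Fintype.card_sigma]
  have h2 : ∀ v : TVert 7 1 9, Fintype.card (Chain 3 v × Chain 2 v × Chain 1 v)
      = wfun 3 (tLevel v) * (wfun 2 (tLevel v) * wfun 1 (tLevel v)) := by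
    intro v
    rw [← Nat.card_eq_fintype_card]
    simp only [Nat.card_prod, chainCard]
  rw [Finset.sum_congr rfl fun v _ => h2 v]
  decide

theorem stmt10 :
    homCount (pathGraph 5) (tGraph 7 1 9) = 9366 ∧
    homCount (pathGraph 7) (tGraph 7 1 9) = 106302 ∧
    homCount (eGraph 5) (tGraph 7 1 9) = 9492 ∧
    homCount (eGraph 7) (tGraph 7 1 9) = 106932 := by
  exact ⟨hP5, hP7, hE5, hE7⟩
end

section
/- There exist real constants c and c' with c > c' such that for all odd n ≥ 1, hom(P_{n+4}, T(7,1,9)) = c λ^n + d μ^n and hom(E_{n+4}, T(7,1,9)) = c' λ^n + d' μ^n for some reals d, d', where λ > μ > 0 are the positive roots of t^4 − 17t^2 + 63 = 0. Consequently, for all sufficiently large odd n, hom(E_n, T(7,1,9)) < hom(P_n, T(7,1,9)). -/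
namespace Pf

abbrev V : Type := TVert 7 1 9
abbrev T : LGraph V := tGraph 7 1 9

instance instDecEqV : DecidableEq V := inferInstanceAs (DecidableEq (TVert 7 1 9))
instance instFintypeV : Fintype V := inferInstanceAs (Fintype (TVert 7 1 9))

def tUpB : V → V → Bool
  | Sum.inl _, Sum.inr (Sum.inl _) => true
  | Sum.inr (Sum.inl i), Sum.inr (Sum.inr (Sum.inl p)) => p.1 = i
  | Sum.inr (Sum.inr (Sum.inl p)), Sum.inr (Sum.inr (Sum.inr q)) =>
      q.1 = p.1 && q.2.1 = p.2
  | _, _ => false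

lemma tUp_iff (a b : V) : tUp 7 1 9 a b ↔ tUpB a b = true := by
  rcases a with _ | a | a | a <;> rcases b with _ | b | b | b <;>
    simp [tUp, tUpB]

instance decAdj (a b : V) : Decidable (T.Adj a b) :=
  decidable_of_iff (tUpB a b = true ∨ tUpB b a = true)
    (by show _ ↔ tUp 7 1 9 a b ∨ tUp 7 1 9 b a; rw [tUp_iff, tUp_iff])

instance decPathAdj {m : ℕ} (i j : Fin m) : Decidable ((pathGraph m).Adj i j) :=
  inferInstanceAs (Decidable (j.val = i.val + 1 ∨ i.val = j.val + 1))

instance decEUp {m : ℕ} (i j : Fin m) : Decidable (eUp m i j) :=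
  inferInstanceAs (Decidable (_ ∨ _))

instance decEAdj {m : ℕ} (i j : Fin m) : Decidable ((eGraph m).Adj i j) :=
  inferInstanceAs (Decidable (_ ∨ _))

instance decIsHomPath {m : ℕ} (f : Fin m → V) : Decidable ((pathGraph m).IsHom T f) :=
  inferInstanceAs (Decidable (∀ x y, (pathGraph m).Adj x y → T.Adj (f x) (f y)))

instance decIsHomE {m : ℕ} (f : Fin m → V) : Decidable ((eGraph m).IsHom T f) :=
  inferInstanceAs (Decidable (∀ x y, (eGraph m).Adj x y → T.Adj (f x) (f y)))

lemma adj_comm (u v : V) : T.Adj u v ↔ T.Adj v u := ⟨T.symm, T.symm⟩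

/-- generic fiber-splitting of cardinalities -/
lemma card_split {α β : Type*} [Fintype α] [Fintype β] [DecidableEq β]
    (P : α → Prop) [DecidablePred P] (φ : α → β) :
    Fintype.card {a // P a} = ∑ b, Fintype.card {a // P a ∧ φ a = b} := by
  rw [← Fintype.card_congr (Equiv.sigmaFiberEquiv (fun a : {a // P a} => φ a.1)),
    Fintype.card_sigma]
  refine Finset.sum_congr rfl fun b _ => Fintype.card_congr ?_
  exact (Equiv.subtypeSubtypeEquivSubtypeInter P (fun a => φ a = b))

end Pf

namespace Pf

lemma isHom_path_iff {m : ℕ} (f : Fin (m + 1) → V) :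
    (pathGraph (m + 1)).IsHom T f ↔
      ∀ k : Fin m, T.Adj (f ⟨k.1, by omega⟩) (f ⟨k.1 + 1, by omega⟩) := by
  constructor
  · intro h k
    exact h (Or.inl rfl)
  · intro h x y hxy
    rcases hxy with h1 | h1
    · have hx : x.1 < m := by omega
      have hy : y = ⟨x.1 + 1, by omega⟩ := Fin.ext h1
      rw [hy]
      exact h ⟨x.1, hx⟩
    · have hy : y.1 < m := by omega
      have hx : x = ⟨y.1 + 1, by omega⟩ := Fin.ext h1
      rw [hx]
      exact T.symm (h ⟨y.1, hy⟩)

/-- number of path homs with prescribed endpoint -/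
def a (m : ℕ) (v : V) : ℕ :=
  Fintype.card {f : Fin (m + 1) → V //
    (pathGraph (m + 1)).IsHom T f ∧ f ⟨m, by omega⟩ = v}

lemma a_zero (v : V) : a 0 v = 1 := by
  rw [a, Fintype.card_eq_one_iff]
  refine ⟨⟨fun _ => v, ?_, rfl⟩, ?_⟩
  · intro x y hxy
    rcases hxy with h | h <;> (exfalso; omega)
  · rintro ⟨g, hg, hgv⟩
    apply Subtype.ext
    funext i
    have : i = ⟨0, by omega⟩ := Fin.ext (by omega)
    rw [this]
    exact hgv

/-- restriction-extension equivalence used for the endpoint recurrence -/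
def stepEquiv (m : ℕ) (u v : V) (hadj : T.Adj u v) :
    {f : Fin (m + 2) → V //
      ((pathGraph (m + 2)).IsHom T f ∧ f ⟨m + 1, by omega⟩ = v) ∧ f ⟨m, by omega⟩ = u}
    ≃ {g : Fin (m + 1) → V // (pathGraph (m + 1)).IsHom T g ∧ g ⟨m, by omega⟩ = u} where
  toFun f := ⟨fun i => f.1 ⟨i.1, by omega⟩,
    by
      rw [isHom_path_iff]
      intro k
      exact (isHom_path_iff _).1 f.2.1.1 ⟨k.1, by omega⟩,
    f.2.2⟩
  invFun g := ⟨fun i => if h : i.1 ≤ m then g.1 ⟨i.1, by omega⟩ else v,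
    ⟨by
      rw [isHom_path_iff]
      intro k
      rcases Nat.lt_or_ge k.1 m with hk | hk
      · have h1 : (⟨k.1, by omega⟩ : Fin (m + 2)).1 ≤ m := by
          simp only [Fin.val_mk]; omega
        have h2 : (⟨k.1 + 1, by omega⟩ : Fin (m + 2)).1 ≤ m := by
          simp only [Fin.val_mk]; omega
        simp only [dif_pos h1, dif_pos h2]
        exact (isHom_path_iff _).1 g.2.1 ⟨k.1, by omega⟩
      · have hk' : k.1 = m := by omega
        have h1 : (⟨k.1, by omega⟩ : Fin (m + 2)).1 ≤ m := by
          simp only [Fin.val_mk]; omega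
        have h2 : ¬ ((⟨k.1 + 1, by omega⟩ : Fin (m + 2)).1 ≤ m) := by
          simp only [Fin.val_mk]; omega
        simp only [dif_pos h1, dif_neg h2]
        have he : g.1 ⟨k.1, by omega⟩ = u := by
          have := g.2.2
          convert this using 2
          exact Fin.ext (by simp only [Fin.val_mk]; omega)
        rw [he]
        exact hadj,
     by
      have h2 : ¬ ((⟨m + 1, by omega⟩ : Fin (m + 2)).1 ≤ m) := by
        simp only [Fin.val_mk]; omega
      simp only [dif_neg h2]⟩,
    by
      have h1 : ((⟨m, by omega⟩ : Fin (m + 2)).1 ≤ m) := by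
        simp only [Fin.val_mk]; omega
      simp only [dif_pos h1]
      exact g.2.2⟩
  left_inv := by
    rintro ⟨f, ⟨hf, hfv⟩, hfu⟩
    apply Subtype.ext
    funext i
    dsimp only
    split_ifs with h
    · rfl
    · have : i = ⟨m + 1, by omega⟩ := Fin.ext (by simp only [Fin.val_mk]; omega)
      rw [this]
      exact hfv.symm
  right_inv := by
    rintro ⟨g, hg⟩
    apply Subtype.ext
    funext i
    simp only [dif_pos (show i.1 ≤ m by omega)]

lemma step_card (m : ℕ) (u v : V) :
    Fintype.card {f : Fin (m + 2) → V //
      ((pathGraph (m + 2)).IsHom T f ∧ f ⟨m + 1, by omega⟩ = v) ∧ f ⟨m, by omega⟩ = u}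
      = if T.Adj u v then a m u else 0 := by
  split_ifs with hadj
  · rw [a]
    exact Fintype.card_congr (stepEquiv m u v hadj)
  · rw [Fintype.card_eq_zero_iff]
    constructor
    rintro ⟨f, ⟨hf, hfv⟩, hfu⟩
    apply hadj
    have := (isHom_path_iff f).1 hf ⟨m, by omega⟩
    rwa [hfu, hfv] at this

lemma a_succ (m : ℕ) (v : V) :
    a (m + 1) v = ∑ u : V, if T.Adj u v then a m u else 0 := by
  rw [a, card_split _ (fun f => f ⟨m, by omega⟩)]
  exact Finset.sum_congr rfl fun u _ => step_card m u v

lemma homCount_path (m : ℕ) :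
    homCount (pathGraph (m + 1)) T = ∑ v : V, a m v := by
  rw [homCount, Nat.card_eq_fintype_card,
    card_split ((pathGraph (m + 1)).IsHom T) (fun f => f ⟨m, by omega⟩)]
  rfl

end Pf
namespace Pf

def nbr : Fin 4 → Fin 4 → ℕ
  | 0, 1 => 7
  | 1, 0 => 1
  | 1, 2 => 1
  | 2, 1 => 1
  | 2, 3 => 9
  | 3, 2 => 1
  | _, _ => 0

lemma nbr_card : ∀ (v : V) (l : Fin 4),
    (Finset.univ.filter fun u => T.Adj u v ∧ tLevel u = l).card = nbr (tLevel v) l := by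
  decide

end Pf
namespace Pf

lemma levelSum (v : V) (g : Fin 4 → ℕ) :
    (∑ u : V, if T.Adj u v then g (tLevel u) else 0) = ∑ l : Fin 4, nbr (tLevel v) l * g l := by
  have h1 : ∀ u : V, (if T.Adj u v then g (tLevel u) else 0)
      = ∑ l : Fin 4, if T.Adj u v ∧ tLevel u = l then g l else 0 := by
    intro u
    split_ifs with h
    · rw [Finset.sum_congr rfl (fun l _ => by
        rw [show (if T.Adj u v ∧ tLevel u = l then g l else 0) = if tLevel u = l then g l else 0
          from by simp [h]])]
      simp
    · simp [h]
  rw [Finset.sum_congr rfl fun u _ => h1 u, Finset.sum_comm]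
  refine Finset.sum_congr rfl fun l _ => ?_
  rw [Finset.sum_ite, Finset.sum_const, Finset.sum_const_zero, add_zero, smul_eq_mul,
    nbr_card v l]

lemma sumLevel (g : Fin 4 → ℕ) :
    ∑ v : V, g (tLevel v) = g 0 + 7 * g 1 + 7 * g 2 + 63 * g 3 := by
  simp [Fintype.sum_sum_type, tLevel, Finset.sum_const, Finset.card_univ]
  ring

def Astep (s : Fin 4 → ℕ) : Fin 4 → ℕ := fun l => ∑ l' : Fin 4, nbr l l' * s l'

def A : ℕ → Fin 4 → ℕ
  | 0 => fun _ => 1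
  | (m + 1) => Astep (A m)

lemma a_eq (m : ℕ) (v : V) : a m v = A m (tLevel v) := by
  induction m generalizing v with
  | zero => rw [a_zero]; rfl
  | succ m ih =>
    rw [a_succ, A, Astep, ← levelSum v (A m)]
    refine Finset.sum_congr rfl fun u _ => ?_
    split_ifs with h
    · exact ih u
    · rfl

lemma homCount_path' (m : ℕ) :
    homCount (pathGraph (m + 1)) T = A m 0 + 7 * A m 1 + 7 * A m 2 + 63 * A m 3 := by
  rw [homCount_path, Finset.sum_congr rfl fun v _ => a_eq m v]
  exact sumLevel (A m)

end Pf
namespace Pf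

def w1 : Fin 4 → ℕ
  | 0 => 7
  | 1 => 2
  | 2 => 10
  | 3 => 1

def w2 : Fin 4 → ℕ
  | 0 => 14
  | 1 => 17
  | 2 => 11
  | 3 => 10

lemma w1_card : ∀ v : V, Fintype.card {r : V // T.Adj v r} = w1 (tLevel v) := by
  decide

lemma w2_nbr : ∀ l : Fin 4, (∑ l' : Fin 4, nbr l l' * w1 l') = w2 l := by decide

lemma levelSum' (v : V) (g : Fin 4 → ℕ) :
    (∑ u : V, if T.Adj v u then g (tLevel u) else 0) = ∑ l : Fin 4, nbr (tLevel v) l * g l := by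
  rw [← levelSum v g]
  exact Finset.sum_congr rfl fun u _ => if_congr (adj_comm v u) rfl rfl

/-- the positive case of the 2-walk fiber -/
def twoWalkEquiv (v p : V) (h : T.Adj v p) :
    {pq : V × V // (T.Adj v pq.1 ∧ T.Adj pq.1 pq.2) ∧ pq.1 = p} ≃ {q : V // T.Adj p q} where
  toFun x := ⟨x.1.2, by have h2 := x.2.1.2; rwa [x.2.2] at h2⟩
  invFun q := ⟨(p, q.1), ⟨h, q.2⟩, rfl⟩
  left_inv := by
    rintro ⟨⟨p', q⟩, ⟨h1, h2⟩, rfl⟩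
    rfl
  right_inv := by
    rintro ⟨q, hq⟩
    rfl

lemma w2_card (v : V) :
    Fintype.card {pq : V × V // T.Adj v pq.1 ∧ T.Adj pq.1 pq.2} = w2 (tLevel v) := by
  rw [card_split _ (fun pq => pq.1)]
  have h1 : ∀ p : V, Fintype.card {pq : V × V // (T.Adj v pq.1 ∧ T.Adj pq.1 pq.2) ∧ pq.1 = p}
      = if T.Adj v p then w1 (tLevel p) else 0 := by
    intro p
    split_ifs with h
    · rw [Fintype.card_congr (twoWalkEquiv v p h)]
      exact w1_card p
    · rw [Fintype.card_eq_zero_iff]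
      constructor
      rintro ⟨⟨p', q⟩, ⟨h1, h2⟩, rfl⟩
      exact h h1
  rw [Finset.sum_congr rfl fun p _ => h1 p, levelSum' v w1, w2_nbr]

def yEquiv (v : V) :
    {pqr : V × V × V // T.Adj v pqr.1 ∧ T.Adj pqr.1 pqr.2.1 ∧ T.Adj v pqr.2.2}
    ≃ {pq : V × V // T.Adj v pq.1 ∧ T.Adj pq.1 pq.2} × {r : V // T.Adj v r} where
  toFun x := (⟨(x.1.1, x.1.2.1), x.2.1, x.2.2.1⟩, ⟨x.1.2.2, x.2.2.2⟩)
  invFun y := ⟨(y.1.1.1, y.1.1.2, y.2.1), y.1.2.1, y.1.2.2, y.2.2⟩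
  left_inv := by rintro ⟨⟨p, q, r⟩, h⟩; rfl
  right_inv := by rintro ⟨⟨⟨p, q⟩, h⟩, ⟨r, hr⟩⟩; rfl

lemma y_card (v : V) :
    Fintype.card {pqr : V × V × V // T.Adj v pqr.1 ∧ T.Adj pqr.1 pqr.2.1 ∧ T.Adj v pqr.2.2}
      = w2 (tLevel v) * w1 (tLevel v) := by
  rw [Fintype.card_congr (yEquiv v), Fintype.card_prod, w2_card, w1_card]

end Pf
namespace Pf

lemma isHom_e_of {n : ℕ} (f : Fin n → V)
    (h : ∀ i j : Fin n, eUp n i j → T.Adj (f i) (f j)) : (eGraph n).IsHom T f :=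
  fun x y hxy => hxy.elim (h x y) (fun h' => T.symm (h y x h'))

def assemble (n : ℕ) (g : Fin (n + 1) → V) (p q r : V) : Fin (n + 4) → V := fun i =>
  if h : i.1 ≤ n then g ⟨i.1, by omega⟩
  else if i.1 = n + 1 then p
  else if i.1 = n + 2 then q
  else r

variable {n : ℕ} {g : Fin (n + 1) → V} {p q r : V} in
lemma assemble_low (i : Fin (n + 4)) (h : i.1 ≤ n) :
    assemble n g p q r i = g ⟨i.1, by omega⟩ := dif_pos h

variable {n : ℕ} {g : Fin (n + 1) → V} {p q r : V} in
lemma assemble_p (i : Fin (n + 4)) (h : i.1 = n + 1) :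
    assemble n g p q r i = p := by
  rw [assemble, dif_neg (by omega)]
  rw [if_pos h]

variable {n : ℕ} {g : Fin (n + 1) → V} {p q r : V} in
lemma assemble_q (i : Fin (n + 4)) (h : i.1 = n + 2) :
    assemble n g p q r i = q := by
  rw [assemble, dif_neg (by omega)]
  rw [if_neg (by omega), if_pos h]

variable {n : ℕ} {g : Fin (n + 1) → V} {p q r : V} in
lemma assemble_r (i : Fin (n + 4)) (h : i.1 = n + 3) :
    assemble n g p q r i = r := by
  rw [assemble, dif_neg (by omega)]
  rw [if_neg (by omega), if_neg (by omega)]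

set_option maxHeartbeats 2000000 in
def eEquiv (n : ℕ) (v : V) :
    {f : Fin (n + 4) → V // (eGraph (n + 4)).IsHom T f ∧ f ⟨n, by omega⟩ = v}
    ≃ {g : Fin (n + 1) → V // (pathGraph (n + 1)).IsHom T g ∧ g ⟨n, by omega⟩ = v}
      × {pqr : V × V × V // T.Adj v pqr.1 ∧ T.Adj pqr.1 pqr.2.1 ∧ T.Adj v pqr.2.2} where
  toFun f :=
    (⟨fun i => f.1 ⟨i.1, by omega⟩,
      by
        rw [isHom_path_iff]
        intro k
        exact f.2.1 (Or.inl (Or.inl ⟨rfl, by show k.1 + 1 ≤ n + 4 - 2; omega⟩)),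
      f.2.2⟩,
     ⟨(f.1 ⟨n + 1, by omega⟩, f.1 ⟨n + 2, by omega⟩, f.1 ⟨n + 3, by omega⟩),
      by
        have h1 := f.2.1 (x := ⟨n, by omega⟩) (y := ⟨n + 1, by omega⟩)
          (Or.inl (Or.inl ⟨rfl, by show n + 1 ≤ n + 4 - 2; omega⟩))
        rwa [f.2.2] at h1,
      f.2.1 (x := ⟨n + 1, by omega⟩) (y := ⟨n + 2, by omega⟩)
        (Or.inl (Or.inl ⟨rfl, by show n + 2 ≤ n + 4 - 2; omega⟩)),
      by
        have h1 := f.2.1 (x := ⟨n, by omega⟩) (y := ⟨n + 3, by omega⟩)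
          (Or.inl (Or.inr ⟨by show n = n + 4 - 4; omega, by show n + 3 = n + 4 - 1; omega⟩))
        rwa [f.2.2] at h1⟩)
  invFun gp :=
    ⟨assemble n gp.1.1 gp.2.1.1 gp.2.1.2.1 gp.2.1.2.2,
     by
      apply isHom_e_of
      intro i j hup
      rcases hup with ⟨h1, h2⟩ | ⟨h1, h2⟩
      · have h2' : j.1 ≤ n + 2 := by omega
        rcases Nat.lt_or_ge i.1 n with hi | hi
        · rw [assemble_low i (by omega), assemble_low j (by omega)]
          have hj : (⟨j.1, by omega⟩ : Fin (n + 1)) = ⟨i.1 + 1, by omega⟩ := Fin.ext h1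
          rw [hj]
          exact (isHom_path_iff _).1 gp.1.2.1 ⟨i.1, by omega⟩
        · rcases Nat.lt_or_ge i.1 (n + 1) with hi2 | hi2
          · rw [assemble_low i (by omega), assemble_p j (by omega)]
            have hg : gp.1.1 ⟨i.1, by omega⟩ = v := by
              have h5 := gp.1.2.2
              convert h5 using 2
              exact Fin.ext (by show i.1 = n; omega)
            rw [hg]
            exact gp.2.2.1
          · rw [assemble_p i (by omega), assemble_q j (by omega)]
            exact gp.2.2.2.1
      · have hi : i.1 = n + 4 - 4 := h1
        have hj : j.1 = n + 4 - 1 := h2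
        rw [assemble_low i (by omega), assemble_r j (by omega)]
        have hg : gp.1.1 ⟨i.1, by omega⟩ = v := by
          have h5 := gp.1.2.2
          convert h5 using 2
          exact Fin.ext (by show i.1 = n; omega)
        rw [hg]
        exact gp.2.2.2.2,
     by
      rw [assemble_low ⟨n, by omega⟩ (by show n ≤ n; omega)]
      exact gp.1.2.2⟩
  left_inv := by
    rintro ⟨f, hf, hfv⟩
    apply Subtype.ext
    funext i
    show assemble n _ _ _ _ i = f i
    rcases Nat.lt_or_ge i.1 (n + 1) with h | h
    · rw [assemble_low i (by omega)]
    · rcases Nat.lt_or_ge i.1 (n + 2) with h1 | h1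
      · rw [assemble_p i (by omega)]
        exact congrArg f (Fin.ext (by show n + 1 = i.1; omega))
      · rcases Nat.lt_or_ge i.1 (n + 3) with h3 | h3
        · rw [assemble_q i (by omega)]
          exact congrArg f (Fin.ext (by show n + 2 = i.1; omega))
        · rw [assemble_r i (by omega)]
          exact congrArg f (Fin.ext (by show n + 3 = i.1; omega))
  right_inv := by
    rintro ⟨⟨g, hg⟩, ⟨⟨p, q, r⟩, hpqr⟩⟩
    refine Prod.ext (Subtype.ext ?_) (Subtype.ext ?_)
    · funext i
      dsimp only
      rw [assemble_low ⟨i.1, by omega⟩ (by show i.1 ≤ n; omega)]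
    · dsimp only
      rw [assemble_p ⟨n + 1, by omega⟩ rfl, assemble_q ⟨n + 2, by omega⟩ rfl,
        assemble_r ⟨n + 3, by omega⟩ rfl]

lemma homCount_e (n : ℕ) :
    homCount (eGraph (n + 4)) T = ∑ v : V, a n v * (w2 (tLevel v) * w1 (tLevel v)) := by
  rw [homCount, Nat.card_eq_fintype_card,
    card_split ((eGraph (n + 4)).IsHom T) (fun f => f ⟨n, by omega⟩)]
  refine Finset.sum_congr rfl fun v _ => ?_
  rw [Fintype.card_congr (eEquiv n v), Fintype.card_prod, y_card]
  rfl

end Pf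
namespace Pf

lemma Astep4 (s : Fin 4 → ℕ) (l : Fin 4) :
    Astep (Astep (Astep (Astep s))) l + 63 * s l = 17 * Astep (Astep s) l := by
  fin_cases l <;> simp [Astep, Fin.sum_univ_four, nbr] <;> ring

lemma A_four (m : ℕ) : A (m + 4) = Astep (Astep (Astep (Astep (A m)))) := rfl

lemma A_two (m : ℕ) : A (m + 2) = Astep (Astep (A m)) := rfl

lemma A_rec (m : ℕ) (l : Fin 4) : A (m + 4) l + 63 * A m l = 17 * A (m + 2) l := by
  rw [A_four, A_two]; exact Astep4 (A m) l

def FP (m : ℕ) : ℕ := A m 0 + 7 * A m 1 + 7 * A m 2 + 63 * A m 3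

def FE (m : ℕ) : ℕ := 98 * A m 0 + 238 * A m 1 + 770 * A m 2 + 630 * A m 3

lemma FP_rec (m : ℕ) : FP (m + 4) + 63 * FP m = 17 * FP (m + 2) := by
  have h0 := A_rec m 0
  have h1 := A_rec m 1
  have h2 := A_rec m 2
  have h3 := A_rec m 3
  simp only [FP]
  omega

lemma FE_rec (m : ℕ) : FE (m + 4) + 63 * FE m = 17 * FE (m + 2) := by
  have h0 := A_rec m 0
  have h1 := A_rec m 1
  have h2 := A_rec m 2
  have h3 := A_rec m 3
  simp only [FE]
  omega

lemma homCount_path_FP (m : ℕ) : homCount (pathGraph (m + 1)) T = FP m :=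
  homCount_path' m

lemma homCount_e_FE (n : ℕ) : homCount (eGraph (n + 4)) T = FE n := by
  rw [homCount_e, Finset.sum_congr rfl fun v _ => by rw [a_eq n v],
    sumLevel (fun l => A n l * (w2 l * w1 l))]
  show A n 0 * 98 + 7 * (A n 1 * 34) + 7 * (A n 2 * 110) + 63 * (A n 3 * 10) = FE n
  rw [FE]; ring

lemma FP4 : FP 4 = 9366 := by decide
lemma FP6 : FP 6 = 106302 := by decide
lemma FE1 : FE 1 = 9492 := by decide
lemma FE3 : FE 3 = 106932 := by decide

/-- closed form for sequences satisfying the recurrence -/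
lemma closed_form (lam mu : ℝ)
    (hl : lam ^ 4 - 17 * lam ^ 2 + 63 = 0) (hmu : mu ^ 4 - 17 * mu ^ 2 + 63 = 0)
    (F : ℕ → ℕ) (hrec : ∀ m : ℕ, F (m + 4) + 63 * F m = 17 * F (m + 2))
    (c d : ℝ) (h1 : (F 1 : ℝ) = c * lam + d * mu)
    (h3 : (F 3 : ℝ) = c * lam ^ 3 + d * mu ^ 3) :
    ∀ n : ℕ, Odd n → (F n : ℝ) = c * lam ^ n + d * mu ^ n := by
  have hrecR : ∀ m : ℕ, (F (m + 4) : ℝ) = 17 * F (m + 2) - 63 * F m := by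
    intro m
    have := hrec m
    have hcast : (F (m + 4) : ℝ) + 63 * F m = 17 * F (m + 2) := by exact_mod_cast this
    linarith
  have main : ∀ k : ℕ,
      ((F (2 * k + 1) : ℝ) = c * lam ^ (2 * k + 1) + d * mu ^ (2 * k + 1)) ∧
      ((F (2 * k + 3) : ℝ) = c * lam ^ (2 * k + 3) + d * mu ^ (2 * k + 3)) := by
    intro k
    induction k with
    | zero => exact ⟨by simpa using h1, by simpa using h3⟩
    | succ k ih =>
      have e1 : 2 * (k + 1) + 1 = 2 * k + 3 := by ring
      have e2 : 2 * (k + 1) + 3 = (2 * k + 1) + 4 := by ring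
      constructor
      · rw [e1]; exact ih.2
      · rw [e2, hrecR (2 * k + 1)]
        have e3 : (2 * k + 1) + 2 = 2 * k + 3 := by ring
        rw [e3, ih.1, ih.2]
        have e4 : (2 * k + 1) + 4 = (2 * k + 1) + 4 := rfl
        linear_combination (-(c * lam ^ (2 * k + 1))) * hl + (-(d * mu ^ (2 * k + 1))) * hmu
  intro n hn
  obtain ⟨k, hk⟩ := hn
  have : n = 2 * k + 1 := by omega
  rw [this]
  exact (main k).1

end Pf

open Pf in
theorem stmt11 (lam mu : ℝ) (hlm : lam > mu) (hm : mu > 0)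
    (hl : lam ^ 4 - 17 * lam ^ 2 + 63 = 0) (hmu : mu ^ 4 - 17 * mu ^ 2 + 63 = 0) :
    (∃ c c' d d' : ℝ, c > c' ∧ ∀ n : ℕ, Odd n →
      (homCount (pathGraph (n + 4)) (tGraph 7 1 9) : ℝ) = c * lam ^ n + d * mu ^ n ∧
      (homCount (eGraph (n + 4)) (tGraph 7 1 9) : ℝ) = c' * lam ^ n + d' * mu ^ n) ∧
    (∃ N : ℕ, ∀ n ≥ N, Odd n →
      homCount (eGraph n) (tGraph 7 1 9) < homCount (pathGraph n) (tGraph 7 1 9)) := by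
  have hl0 : lam > 0 := lt_trans hm hlm
  have hlne : lam ≠ 0 := ne_of_gt hl0
  have hmne : mu ≠ 0 := ne_of_gt hm
  have hD : lam ^ 2 - mu ^ 2 > 0 := by
    nlinarith [mul_pos (sub_pos.2 hlm) (show (0:ℝ) < lam + mu by linarith)]
  have hDne : lam ^ 2 - mu ^ 2 ≠ 0 := ne_of_gt hD
  have hmu5 : mu ^ 2 > 5 := by
    by_contra h
    push_neg at h
    nlinarith [hmu]
  set c : ℝ := (106302 - mu ^ 2 * 9366) / (lam * (lam ^ 2 - mu ^ 2)) with hc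
  set d : ℝ := (lam ^ 2 * 9366 - 106302) / (mu * (lam ^ 2 - mu ^ 2)) with hd
  set c' : ℝ := (106932 - mu ^ 2 * 9492) / (lam * (lam ^ 2 - mu ^ 2)) with hc'
  set d' : ℝ := (lam ^ 2 * 9492 - 106932) / (mu * (lam ^ 2 - mu ^ 2)) with hd'
  have hPclosed : ∀ n : ℕ, Odd n → ((FP (n + 3) : ℝ)) = c * lam ^ n + d * mu ^ n := by
    refine closed_form lam mu hl hmu (fun n => FP (n + 3)) (fun m => FP_rec (m + 3)) c d ?_ ?_
    · show ((FP 4 : ℕ) : ℝ) = c * lam + d * mu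
      rw [FP4, hc, hd]
      push_cast
      field_simp
      ring
    · show ((FP 6 : ℕ) : ℝ) = c * lam ^ 3 + d * mu ^ 3
      rw [FP6, hc, hd]
      push_cast
      field_simp
      ring
  have hEclosed : ∀ n : ℕ, Odd n → ((FE n : ℝ)) = c' * lam ^ n + d' * mu ^ n := by
    refine closed_form lam mu hl hmu FE FE_rec c' d' ?_ ?_
    · rw [FE1, hc', hd']
      push_cast
      field_simp
      ring
    · rw [FE3, hc', hd']
      push_cast
      field_simp
      ring
  have hcc' : c > c' := by
    rw [gt_iff_lt, ← sub_pos]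
    have he : c - c' = (126 * mu ^ 2 - 630) / (lam * (lam ^ 2 - mu ^ 2)) := by
      rw [hc, hc']
      field_simp
      ring
    rw [he]
    exact div_pos (by linarith) (mul_pos hl0 hD)
  have hPn : ∀ n : ℕ, homCount (pathGraph (n + 4)) (tGraph 7 1 9) = FP (n + 3) :=
    fun n => homCount_path_FP (n + 3)
  have hEn : ∀ n : ℕ, homCount (eGraph (n + 4)) (tGraph 7 1 9) = FE n :=
    fun n => homCount_e_FE n
  constructor
  · refine ⟨c, c', d, d', hcc', fun n hn => ⟨?_, ?_⟩⟩
    · rw [hPn n]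
      exact hPclosed n hn
    · rw [hEn n]
      exact hEclosed n hn
  · have hr1 : 1 < lam / mu := (one_lt_div hm).2 hlm
    obtain ⟨M, hM⟩ := pow_unbounded_of_one_lt ((|d' - d| + 1) / (c - c')) hr1
    refine ⟨M + 5, fun n hn hodd => ?_⟩
    have hn4 : n = (n - 4) + 4 := by omega
    set m := n - 4 with hmdef
    have hoddm : Odd m := by
      rcases hodd with ⟨k, hk⟩
      exact ⟨k - 2, by omega⟩
    have hmM : m ≥ M := by omega
    have hsub : c - c' > 0 := by linarith
    have key : (homCount (eGraph (m + 4)) (tGraph 7 1 9) : ℝ)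
        < (homCount (pathGraph (m + 4)) (tGraph 7 1 9) : ℝ) := by
      rw [hPn m, hEn m, hPclosed m hoddm, hEclosed m hoddm]
      have h5 : (lam / mu) ^ m ≥ (lam / mu) ^ M := pow_le_pow_right₀ (le_of_lt hr1) hmM
      have h6 : (|d' - d| + 1) < (c - c') * (lam / mu) ^ m := by
        have := (div_lt_iff₀ hsub).1 (lt_of_lt_of_le hM h5)
        linarith
      have h8 : (0:ℝ) < mu ^ m := pow_pos hm m
      have h7 : lam ^ m = (lam / mu) ^ m * mu ^ m := by
        rw [div_pow]
        field_simp
      have h9 : (|d' - d| + 1) * mu ^ m < ((c - c') * (lam / mu) ^ m) * mu ^ m :=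
        mul_lt_mul_of_pos_right h6 h8
      have h10 : (d' - d) * mu ^ m < (c - c') * lam ^ m := by
        have habs : d' - d ≤ |d' - d| := le_abs_self _
        have h11 : (d' - d) * mu ^ m ≤ |d' - d| * mu ^ m :=
          mul_le_mul_of_nonneg_right habs (le_of_lt h8)
        rw [h7]
        nlinarith [h9, h11, h8]
      nlinarith [h10]
    rw [hn4]
    exact_mod_cast key
end
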